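/- Let I_k^{(d)} = ⋂_g ℘_g^d be the ideal of the scheme of fat points of multiplicity d supported on the k^n points [1:ξ^{g₁}:…:ξ^{gₙ}] of ℙ^n. Then I_k^{(d)} = (x₀^k − x_n^k, x₁^k − x_n^k, …, x_{n−1}^k − x_n^k)^d; in particular, I_k^{(d)} is generated by the degree-kd forms ∏_{i=0}^{n−1} (x_i^k − x_n^k)^{a_i} with a ∈ ℕ^n, a₀+…+a_{n−1} = d, and I_k^{(d)} equals the d-th ordinary power ( ⋂_g ℘_g )^d. -/

import Mathlib

open MvPolynomial

/-- The vanishing ideal `℘_g` of the point `[1:ξ^{g₁}:…:ξ^{gₙ}] ∈ ℙⁿ`,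
generated by the linear forms `x_i − ξ^{g_i}·x₀`, `i = 1,…,n`. -/
noncomputable def qIdeal (n k : ℕ) (ξ : ℂ) (g : Fin n → ZMod k) :
    Ideal (MvPolynomial (Fin (n+1)) ℂ) :=
  Ideal.span { p | ∃ i : Fin n,
    p = X i.succ - C (ξ ^ (g i).val) * X (0 : Fin (n+1)) }

/-- The fat-point ideal `I_k^{(d)} = ⋂_{g ∈ (ℤ/kℤ)^n} ℘_g^d`. -/
noncomputable def fatIdealK (n k d : ℕ) (ξ : ℂ) :
    Ideal (MvPolynomial (Fin (n+1)) ℂ) :=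
  ⨅ g : Fin n → ZMod k, (qIdeal n k ξ g) ^ d


noncomputable section FatAux

namespace FatAux

variable {n : ℕ}

local notation "R" => MvPolynomial (Fin (n+1)) ℂ

def wt (e : Fin (n+1) →₀ ℕ) : ℕ := ∑ i : Fin n, e i.succ

def Pid (n : ℕ) : Ideal (MvPolynomial (Fin (n+1)) ℂ) :=
  Ideal.span (Set.range fun i : Fin n => (X i.succ : MvPolynomial (Fin (n+1)) ℂ))

lemma X_succ_mem_Pid (i : Fin n) : (X i.succ : R) ∈ Pid n :=
  Ideal.subset_span ⟨i, rfl⟩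

lemma prod_pow_mem {A : Type*} [CommRing A] (I : Ideal A) {ι : Type*} (s : Finset ι)
    (p : ι → A) (m : ι → ℕ) (h : ∀ i ∈ s, p i ∈ I) :
    (∏ i ∈ s, p i ^ m i) ∈ I ^ (∑ i ∈ s, m i) := by
  classical
  induction s using Finset.cons_induction with
  | empty => simp [Ideal.one_eq_top]
  | cons a s ha ih =>
    rw [Finset.prod_cons, Finset.sum_cons, pow_add]
    exact Ideal.mul_mem_mul (Ideal.pow_mem_pow (h a (Finset.mem_cons_self a s)) _)
      (ih fun i hi => h i (Finset.mem_cons_of_mem hi))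

lemma monomial_mem_wt (e : Fin (n+1) →₀ ℕ) (v : ℂ) :
    (monomial e v : R) ∈ Pid n ^ wt e := by
  rw [monomial_eq, Finsupp.prod_fintype _ _ (fun i => pow_zero _), Fin.prod_univ_succ]
  exact Ideal.mul_mem_left _ _ (Ideal.mul_mem_left _ _
    (prod_pow_mem (Pid n) Finset.univ _ _ fun i _ => X_succ_mem_Pid i))

lemma mem_pow_of_support (G : R) (d : ℕ) (h : ∀ e ∈ G.support, d ≤ wt e) :
    G ∈ Pid n ^ d := by
  rw [← support_sum_monomial_coeff G]
  exact Submodule.sum_mem _ fun e he =>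
    Ideal.pow_le_pow_right (h e he) (monomial_mem_wt e _)

def Lam (n : ℕ) : MvPolynomial (Fin (n+1)) ℂ →ₐ[ℂ] Polynomial (MvPolynomial (Fin (n+1)) ℂ) :=
  aeval fun j => Fin.cases (Polynomial.C (X 0)) (fun i => Polynomial.C (X i.succ) * Polynomial.X) j

lemma Lam_monomial (e : Fin (n+1) →₀ ℕ) (v : ℂ) :
    Lam n (monomial e v) = Polynomial.C (monomial e v) * Polynomial.X ^ wt e := by
  rw [Lam, aeval_monomial, Finsupp.prod_fintype _ _ (fun i => pow_zero _), Fin.prod_univ_succ]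
  simp only [Fin.cases_zero, Fin.cases_succ]
  rw [monomial_eq, Finsupp.prod_fintype _ _ (fun i => pow_zero _), Fin.prod_univ_succ]
  simp only [mul_pow, Finset.prod_mul_distrib, ← map_pow, ← map_prod,
    Finset.prod_pow_eq_pow_sum, Polynomial.algebraMap_apply, MvPolynomial.algebraMap_eq,
    map_mul, wt]
  ring

lemma Lam_coeff_mem (G : R) (j : ℕ) : (Lam n G).coeff j ∈ Pid n ^ j := by
  have hG : Lam n G = ∑ e ∈ G.support, Lam n (monomial e (coeff e G)) := by
    rw [← map_sum, support_sum_monomial_coeff]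
  rw [hG, Polynomial.finset_sum_coeff]
  refine Submodule.sum_mem _ fun e he => ?_
  rw [Lam_monomial, Polynomial.coeff_C_mul, Polynomial.coeff_X_pow]
  by_cases h : j = wt e
  · subst h; simpa using monomial_mem_wt e _
  · simp [h]

lemma eval_one_Lam (G : R) : Polynomial.eval 1 (Lam n G) = G := by
  have : (Polynomial.evalRingHom (1 : R)).comp (Lam n).toRingHom = RingHom.id R := by
    apply MvPolynomial.ringHom_ext
    · intro r
      simp [Lam, Polynomial.algebraMap_apply, MvPolynomial.algebraMap_eq]
    · intro j
      induction j using Fin.cases <;> simp [Lam]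
  exact RingHom.congr_fun this G

lemma mem_Pid_pow_iff (G : R) (d : ℕ) :
    G ∈ Pid n ^ d ↔ Polynomial.X ^ d ∣ Lam n G := by
  constructor
  · intro h
    induction d generalizing G with
    | zero => simp only [pow_zero]; exact one_dvd _
    | succ d ih =>
      rw [pow_succ] at h
      refine Submodule.mul_induction_on h (fun a ha b hb => ?_) (fun x y hx hy => by rw [map_add]; exact dvd_add hx hy)
      have hdvd : Polynomial.X ∣ Lam n b := by
        refine Submodule.span_induction ?_ ?_ ?_ ?_ hb
        · rintro p ⟨i, rfl⟩
          refine ⟨Polynomial.C (X i.succ), ?_⟩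
          simp only [Lam, aeval_X, Fin.cases_succ]; ring
        · simp
        · intro x y _ _ hx hy; rw [map_add]; exact dvd_add hx hy
        · intro r x _ hx; rw [smul_eq_mul, map_mul]; exact Dvd.dvd.mul_left hx _
      rw [pow_succ, map_mul]
      exact mul_dvd_mul (ih a ha) hdvd
  · intro h
    have hG : G = ∑ j ∈ (Lam n G).support, (Lam n G).coeff j := by
      conv_lhs => rw [← eval_one_Lam G]
      rw [Polynomial.eval_eq_sum, Polynomial.sum]
      simp
    rw [hG]
    refine Submodule.sum_mem _ fun j hj => ?_
    rcases lt_or_ge j d with hjd | hjd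
    · rw [Polynomial.X_pow_dvd_iff] at h
      rw [h j hjd]; exact Submodule.zero_mem _
    · exact Ideal.pow_le_pow_right hjd (Lam_coeff_mem G j)

lemma not_mem_Pid_iff (G : R) : G ∉ Pid n ↔ ¬ Polynomial.X ∣ Lam n G := by
  rw [← pow_one (Pid n), mem_Pid_pow_iff, pow_one]

lemma Pid_pow_primary {a b : R} {d : ℕ} (ha : a ∉ Pid n) (h : a * b ∈ Pid n ^ d) :
    b ∈ Pid n ^ d := by
  rw [mem_Pid_pow_iff] at h ⊢
  rw [map_mul] at h
  exact (Polynomial.prime_X).pow_dvd_of_dvd_mul_left d ((not_mem_Pid_iff a).1 ha) h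

lemma X_factor {A : Type*} [CommRing A] (k : ℕ) (a b : A) :
    ∃ s : Polynomial A,
      (Polynomial.C a * Polynomial.X + Polynomial.C b) ^ k - Polynomial.C (b ^ k)
      = Polynomial.X * (Polynomial.C ((k : A) * a * b ^ (k-1)) + Polynomial.X * s) := by
  set P := (Polynomial.C a * Polynomial.X + Polynomial.C b) ^ k - Polynomial.C (b ^ k) with hP
  have h0 : P.coeff 0 = 0 := by
    rw [Polynomial.coeff_zero_eq_eval_zero]; simp [P]
  obtain ⟨P₁, hP₁⟩ := Polynomial.X_dvd_iff.2 h0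
  have hD : Polynomial.derivative P
      = Polynomial.C ((k:A)) * (Polynomial.C a * Polynomial.X + Polynomial.C b)^(k-1)
        * Polynomial.C a := by
    simp [P, Polynomial.derivative_pow]
  have h1 : P₁.coeff 0 = (k : A) * a * b ^ (k-1) := by
    have hder := congrArg Polynomial.derivative hP₁
    rw [hD, Polynomial.derivative_mul, Polynomial.derivative_X, one_mul] at hder
    have hev := congrArg (Polynomial.eval 0) hder
    simp only [Polynomial.eval_add, Polynomial.eval_mul, Polynomial.eval_pow,
      Polynomial.eval_C, Polynomial.eval_X, zero_mul, mul_zero, add_zero, mul_one] at hev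
    rw [Polynomial.coeff_zero_eq_eval_zero, ← hev]
    ring
  obtain ⟨s, hs⟩ := Polynomial.X_dvd_iff.2
    (show (P₁ - Polynomial.C ((k:A)*a*b^(k-1))).coeff 0 = 0 by
      rw [Polynomial.coeff_sub, h1, Polynomial.coeff_C_zero, sub_self])
  refine ⟨s, ?_⟩
  rw [hP₁]
  rw [sub_eq_iff_eq_add] at hs
  rw [hs]
  ring

def theta (n k : ℕ) : MvPolynomial (Fin (n+1)) ℂ →ₐ[ℂ] MvPolynomial (Fin (n+1)) ℂ :=
  aeval fun j => Fin.cases (X 0) (fun i => (X i.succ + X 0)^k - X 0^k) j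

lemma theta_key (k d : ℕ) (hk : 1 ≤ k) (G : R)
    (h : Polynomial.X ^ d ∣ Lam n (theta n k G)) : G ∈ Pid n ^ d := by
  classical
  set b : Fin n → R := fun i => (k:R) * X i.succ * X 0^(k-1) with hb
  have hfac : ∀ i : Fin n, ∃ s : Polynomial R,
      Lam n ((X i.succ + X 0)^k - X 0^k)
        = Polynomial.X * (Polynomial.C (b i) + Polynomial.X * s) := by
    intro i
    obtain ⟨s, hs⟩ := X_factor k (X i.succ : R) (X 0)
    refine ⟨s, ?_⟩
    simp only [map_sub, map_pow, map_add, Lam, aeval_X, Fin.cases_zero, Fin.cases_succ]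
    rw [← Polynomial.C_pow, hs]
  choose s hs0 using hfac
  obtain ⟨W, hW⟩ : ∃ W : Fin n → Polynomial R,
      W = fun i => Polynomial.C (b i) + Polynomial.X * s i := ⟨_, rfl⟩
  have hs : ∀ i : Fin n, Lam n ((X i.succ + X 0)^k - X 0^k) = Polynomial.X * W i := by
    intro i; rw [hW]; exact hs0 i
  have hmono : ∀ (e : Fin (n+1) →₀ ℕ) (v : ℂ), Lam n (theta n k (monomial e v)) =
      Polynomial.X ^ wt e *
        (Polynomial.C (C v * X 0 ^ (e 0)) * ∏ i : Fin n, W i ^ (e i.succ)) := by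
    intro e v
    rw [theta, aeval_monomial, Finsupp.prod_fintype _ _ (fun i => pow_zero _),
      Fin.prod_univ_succ]
    simp only [Fin.cases_zero, Fin.cases_succ, MvPolynomial.algebraMap_eq]
    rw [map_mul, map_mul, map_pow, map_prod]
    have hC : Lam n (C v) = Polynomial.C (C v) := by
      simp [Lam, aeval_C, Polynomial.algebraMap_apply, MvPolynomial.algebraMap_eq]
    have hX0 : Lam n (X (0 : Fin (n+1))) = Polynomial.C (X 0) := by
      simp [Lam]
    rw [hC, hX0]
    have hprod : (∏ i : Fin n, Lam n (((X i.succ + X 0)^k - X 0^k) ^ (e i.succ)))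
        = ∏ i : Fin n, (Polynomial.X * W i) ^ (e i.succ) :=
      Finset.prod_congr rfl fun i _ => by rw [map_pow, hs i]
    rw [hprod]
    simp only [mul_pow, Finset.prod_mul_distrib, Finset.prod_pow_eq_pow_sum]
    rw [map_mul, ← Polynomial.C_pow]
    rw [show (∑ i : Fin n, e i.succ) = wt e from rfl]
    generalize (∏ i : Fin n, W i ^ (e i.succ)) = P
    ring
  have key : ∀ μ : ℕ, μ < d → ∀ e ∈ G.support, wt e ≠ μ := by
    intro μ
    induction μ using Nat.strong_induction_on with
    | _ μ IH =>
    intro hμd e0 he0 hwt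
    have hge : ∀ e ∈ G.support, μ ≤ wt e := by
      intro e he
      by_contra hlt
      push_neg at hlt
      exact IH (wt e) hlt (lt_trans hlt hμd) e he rfl
    obtain ⟨V, hV⟩ : ∃ V : (Fin (n+1) →₀ ℕ) → Polynomial R, V = fun e =>
        Polynomial.C (C (coeff e G) * X 0 ^ (e 0)) * ∏ i : Fin n, W i ^ (e i.succ) := ⟨_, rfl⟩
    have hLam : Lam n (theta n k G)
        = Polynomial.X ^ μ * ∑ e ∈ G.support, Polynomial.X ^ (wt e - μ) * V e := by
      have hsum : theta n k G = ∑ e ∈ G.support, theta n k (monomial e (coeff e G)) := by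
        rw [← map_sum, support_sum_monomial_coeff]
      rw [hsum, map_sum, Finset.mul_sum]
      refine Finset.sum_congr rfl fun e he => ?_
      rw [hmono e _]
      have h2 : wt e = μ + (wt e - μ) := (Nat.add_sub_cancel' (hge e he)).symm
      conv_lhs => rw [h2, pow_add]
      rw [mul_assoc, hV]
    have hdvd : Polynomial.X ∣ ∑ e ∈ G.support, Polynomial.X ^ (wt e - μ) * V e := by
      obtain ⟨Q, hQ⟩ := h
      rw [hLam] at hQ
      have hXμ : (Polynomial.X : Polynomial R)^μ ≠ 0 := pow_ne_zero _ Polynomial.X_ne_zero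
      have hd : (Polynomial.X : Polynomial R)^d = Polynomial.X ^ μ * Polynomial.X ^ (d - μ) := by
        rw [← pow_add, Nat.add_sub_cancel' (le_of_lt hμd)]
      rw [hd, mul_assoc] at hQ
      have hQ' := mul_left_cancel₀ hXμ hQ
      rw [hQ']
      exact Dvd.dvd.mul_right (dvd_pow_self _ (Nat.sub_ne_zero_of_lt hμd)) Q
    have heval0 : ∑ e ∈ G.support, Polynomial.eval 0 (Polynomial.X ^ (wt e - μ) * V e) = 0 := by
      obtain ⟨Q, hQ⟩ := hdvd
      rw [← Polynomial.eval_finset_sum, hQ]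
      simp
    have heval : (∑ e ∈ G.support,
        (if wt e = μ then (C (coeff e G) * X 0 ^ (e 0) * ∏ i : Fin n, b i ^ (e i.succ) : R)
         else 0)) = 0 := by
      refine Eq.trans (Finset.sum_congr rfl fun e he => ?_) heval0
      by_cases hwe : wt e = μ
      · rw [if_pos hwe, hwe, Nat.sub_self, pow_zero, one_mul, hV]
        simp only [Polynomial.eval_mul, Polynomial.eval_C, Polynomial.eval_prod,
          Polynomial.eval_pow]
        have : ∀ i : Fin n, Polynomial.eval 0 (W i) = b i := by
          intro i
          rw [hW]
          simp
        simp only [this]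
      · rw [if_neg hwe]
        have hpos : wt e - μ ≠ 0 := Nat.sub_ne_zero_of_lt (lt_of_le_of_ne (hge e he) (Ne.symm hwe))
        rw [Polynomial.eval_mul, Polynomial.eval_pow, Polynomial.eval_X, zero_pow hpos, zero_mul]
    have hzsucc : ∀ i : Fin n, ((0:Fin (n+1)) = i.succ) = False :=
      fun i => eq_false fun hh => Fin.succ_ne_zero i hh.symm
    have hterm : ∀ e : Fin (n+1) →₀ ℕ, wt e = μ →
        (C (coeff e G) * X 0 ^ (e 0) * ∏ i : Fin n, b i ^ (e i.succ) : R)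
        = monomial (e + Finsupp.single 0 ((k-1) * μ)) (coeff e G * (k:ℂ)^μ) := by
      intro e he
      rw [monomial_eq, Finsupp.prod_fintype _ _ (fun i => pow_zero _), Fin.prod_univ_succ]
      simp only [Finsupp.coe_add, Pi.add_apply, Finsupp.single_apply, hzsucc, if_true,
        eq_self_iff_true, if_false, add_zero]
      simp only [hb, mul_pow, Finset.prod_mul_distrib, Finset.prod_pow_eq_pow_sum]
      rw [show (∑ i : Fin n, e i.succ) = μ from he]
      simp only [map_mul, map_pow, map_natCast]
      rw [pow_add, pow_mul]
      generalize hP : (∏ i : Fin n, (X i.succ : MvPolynomial (Fin (n+1)) ℂ) ^ (e i.succ)) = P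
      ring
    have hset : (∑ e ∈ G.support.filter (fun e => wt e = μ),
        monomial (e + Finsupp.single 0 ((k-1) * μ)) (coeff e G * (k:ℂ)^μ)) = 0 := by
      rw [Finset.sum_filter]
      refine Eq.trans (Finset.sum_congr rfl fun e he => ?_) heval
      by_cases hwe : wt e = μ
      · rw [if_pos hwe, if_pos hwe, hterm e hwe]
      · rw [if_neg hwe, if_neg hwe]
    have hc := congrArg (coeff (e0 + Finsupp.single 0 ((k-1) * μ))) hset
    rw [MvPolynomial.coeff_sum] at hc
    rw [Finset.sum_eq_single e0] at hc
    · rw [coeff_monomial, if_pos rfl, coeff_zero] at hc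
      have hk0 : ((k:ℂ))^μ ≠ 0 := pow_ne_zero _ (Nat.cast_ne_zero.2 (by omega))
      have hcz : coeff e0 G = 0 := by
        rcases mul_eq_zero.1 hc with h' | h'
        · exact h'
        · exact absurd h' hk0
      exact (mem_support_iff.1 he0) hcz
    · intro e he hne
      rw [coeff_monomial, if_neg]
      intro heq
      exact hne (add_left_injective _ heq)
    · intro hne
      exact absurd (Finset.mem_filter.2 ⟨he0, hwt⟩) hne
  refine mem_pow_of_support G d fun e he => ?_
  by_contra hlt
  push_neg at hlt
  exact key (wt e) hlt e he rfl

section Zeta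

variable {k : ℕ} {ξ : ℂ}

lemma pow_congr (hξ : IsPrimitiveRoot ξ k) {a b : ℕ} (h : a ≡ b [MOD k]) :
    ξ ^ a = ξ ^ b := by
  rcases le_total a b with hab | hab
  · obtain ⟨t, ht⟩ := (Nat.modEq_iff_dvd' hab).1 h
    have : b = a + k * t := by omega
    rw [this, pow_add, pow_mul, hξ.pow_eq_one, one_pow, mul_one]
  · obtain ⟨t, ht⟩ := (Nat.modEq_iff_dvd' hab).1 h.symm
    have : a = b + k * t := by omega
    rw [this, pow_add, pow_mul, hξ.pow_eq_one, one_pow, mul_one]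

lemma val_cast_self {m : ℕ} [NeZero m] (c : ZMod m) : ((c.val : ℕ) : ZMod m) = c :=
  ZMod.natCast_rightInverse c

lemma zeta_pow_val_mul (hk : 0 < k) (hξ : IsPrimitiveRoot ξ k) (c : ZMod k) (m : ℕ) :
    (ξ ^ c.val) ^ m = ξ ^ ((c * (m : ZMod k)).val) := by
  haveI : NeZero k := ⟨hk.ne'⟩
  rw [← pow_mul]
  apply pow_congr hξ
  rw [← ZMod.natCast_eq_natCast_iff]
  push_cast
  rw [val_cast_self, val_cast_self]

lemma zeta_mul (hk : 0 < k) (hξ : IsPrimitiveRoot ξ k) (a b : ZMod k) :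
    ξ ^ a.val * ξ ^ b.val = ξ ^ ((a + b).val) := by
  haveI : NeZero k := ⟨hk.ne'⟩
  rw [← pow_add]
  apply pow_congr hξ
  rw [← ZMod.natCast_eq_natCast_iff]
  push_cast
  rw [val_cast_self, val_cast_self, val_cast_self]

lemma sum_zmod {m : ℕ} [NeZero m] (f : ZMod m → ℂ) :
    ∑ c : ZMod m, f c = ∑ j ∈ Finset.range m, f j := by
  refine Finset.sum_nbij' (i := fun c => c.val) (j := fun j => (j : ZMod m)) ?_ ?_ ?_ ?_ ?_
  · intro c _; exact Finset.mem_range.2 (ZMod.val_lt c)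
  · intro j _; exact Finset.mem_univ _
  · intro c _; exact ZMod.natCast_rightInverse c
  · intro j hj; exact ZMod.val_cast_of_lt (Finset.mem_range.1 hj)
  · intro c _; rw [ZMod.natCast_rightInverse c]

lemma char_sum [NeZero k] (hξ : IsPrimitiveRoot ξ k) (m : ZMod k) :
    (∑ c : ZMod k, ξ ^ ((c * m).val)) = if m = 0 then (k:ℂ) else 0 := by
  have hk : 0 < k := Nat.pos_of_ne_zero (NeZero.ne k)
  have h1 : ∀ c : ZMod k, ξ ^ ((c * m).val) = (ξ ^ m.val) ^ c.val := by
    intro c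
    rw [zeta_pow_val_mul hk hξ m c.val, val_cast_self, mul_comm]
  rw [Finset.sum_congr rfl fun c _ => h1 c]
  rw [sum_zmod (fun c => (ξ ^ m.val) ^ ZMod.val c)]
  have h2 : ∀ j ∈ Finset.range k, (ξ ^ m.val) ^ (ZMod.val (j : ZMod k)) = (ξ ^ m.val) ^ j := by
    intro j hj
    rw [ZMod.val_cast_of_lt (Finset.mem_range.1 hj)]
  rw [Finset.sum_congr rfl h2]
  by_cases hm : m = 0
  · subst hm
    simp [ZMod.val_zero]
  · rw [if_neg hm]
    have hne : ξ ^ m.val ≠ 1 := by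
      intro h1
      have := (hξ.pow_eq_one_iff_dvd m.val).1 h1
      have hlt : m.val < k := ZMod.val_lt m
      have hpos : 0 < m.val := Nat.pos_of_ne_zero (fun h => hm ((ZMod.val_eq_zero m).1 h))
      exact absurd (Nat.le_of_dvd hpos this) (by omega)
    rw [geom_sum_eq hne]
    have : (ξ ^ m.val) ^ k = 1 := by
      rw [← pow_mul, mul_comm, pow_mul, hξ.pow_eq_one, one_pow]
    rw [this, sub_self, zero_div]

end Zeta

section Endos

variable (k : ℕ) (ξ : ℂ)

def sig (g : Fin n → ZMod k) : R →ₐ[ℂ] R :=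
  aeval fun j => Fin.cases (X 0) (fun i => C (ξ ^ (g i).val) * X i.succ) j

def tplus (n : ℕ) : MvPolynomial (Fin (n+1)) ℂ →ₐ[ℂ] MvPolynomial (Fin (n+1)) ℂ :=
  aeval fun j => Fin.cases (X 0) (fun i => X i.succ + X 0) j

def tminus (n : ℕ) : MvPolynomial (Fin (n+1)) ℂ →ₐ[ℂ] MvPolynomial (Fin (n+1)) ℂ :=
  aeval fun j => Fin.cases (X 0) (fun i => X i.succ - X 0) j

def rplus (n k : ℕ) : MvPolynomial (Fin (n+1)) ℂ →ₐ[ℂ] MvPolynomial (Fin (n+1)) ℂ :=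
  aeval fun j => Fin.cases (X 0) (fun i => X i.succ + X 0 ^ k) j

def rminus (n k : ℕ) : MvPolynomial (Fin (n+1)) ℂ →ₐ[ℂ] MvPolynomial (Fin (n+1)) ℂ :=
  aeval fun j => Fin.cases (X 0) (fun i => X i.succ - X 0 ^ k) j

def phik (n k : ℕ) : MvPolynomial (Fin (n+1)) ℂ →ₐ[ℂ] MvPolynomial (Fin (n+1)) ℂ :=
  aeval fun j => Fin.cases (X 0) (fun i => X i.succ ^ k) j

lemma tplus_tminus (F : R) : tplus n (tminus n F) = F := by
  have h : ((tplus n).comp (tminus n)) = AlgHom.id ℂ _ := by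
    apply algHom_ext
    intro j
    induction j using Fin.cases <;> simp [tplus, tminus]
  calc tplus n (tminus n F) = ((tplus n).comp (tminus n)) F := rfl
  _ = F := by rw [h]; rfl

lemma rminus_rplus (F : R) : rminus n k (rplus n k F) = F := by
  have h : ((rminus n k).comp (rplus n k)) = AlgHom.id ℂ _ := by
    apply algHom_ext
    intro j
    induction j using Fin.cases <;> simp [rplus, rminus]
  calc rminus n k (rplus n k F) = ((rminus n k).comp (rplus n k)) F := rfl
  _ = F := by rw [h]; rfl

lemma theta_decomp (F : R) : tplus n (phik n k (rminus n k F)) = theta n k F := by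
  have h : ((tplus n).comp ((phik n k).comp (rminus n k))) = theta n k := by
    apply algHom_ext
    intro j
    induction j using Fin.cases <;>
      simp [tplus, phik, rminus, theta, map_sub, map_pow, sub_eq_add_neg]
  calc tplus n (phik n k (rminus n k F))
      = ((tplus n).comp ((phik n k).comp (rminus n k))) F := rfl
  _ = theta n k F := by rw [h]

lemma span_range_map (f : R →ₐ[ℂ] R) (u : Fin n → R) :
    Ideal.map f (Ideal.span (Set.range u)) = Ideal.span (Set.range fun i => f (u i)) := by
  rw [Ideal.map_span, ← Set.range_comp]
  rfl

lemma setOf_eq_range {α : Type*} (h : Fin n → α) :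
    {p | ∃ i : Fin n, p = h i} = Set.range h := by
  ext p
  exact ⟨fun ⟨i, hi⟩ => ⟨i, hi.symm⟩, fun ⟨i, hi⟩ => ⟨i, hi.symm⟩⟩

lemma qIdeal_zero_eq (hk : 0 < k) :
    qIdeal n k ξ 0 = Ideal.map (tminus n) (Pid n) := by
  haveI : NeZero k := ⟨hk.ne'⟩
  rw [Pid, span_range_map, qIdeal]
  congr 1
  rw [setOf_eq_range]
  congr 1
  funext i
  simp [tminus, Pi.zero_apply, ZMod.val_zero]

end Endos

section Sig

variable {k : ℕ} {ξ : ℂ}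

lemma sig_monomial (g : Fin n → ZMod k) (e : Fin (n+1) →₀ ℕ) (v : ℂ) :
    sig k ξ g (monomial e v)
      = monomial e (v * ∏ i : Fin n, (ξ ^ (g i).val) ^ (e i.succ)) := by
  rw [sig, aeval_monomial, Finsupp.prod_fintype _ _ (fun i => pow_zero _), Fin.prod_univ_succ]
  simp only [Fin.cases_zero, Fin.cases_succ, MvPolynomial.algebraMap_eq, mul_pow,
    Finset.prod_mul_distrib, ← map_pow, ← map_prod]
  rw [monomial_eq, Finsupp.prod_fintype _ _ (fun i => pow_zero _), Fin.prod_univ_succ,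
    map_mul]
  generalize hP : (∏ i : Fin n, (X i.succ : MvPolynomial (Fin (n+1)) ℂ) ^ (e i.succ)) = P
  ring

lemma coeff_sig (g : Fin n → ZMod k) (F : MvPolynomial (Fin (n+1)) ℂ) (e : Fin (n+1) →₀ ℕ) :
    coeff e (sig k ξ g F) = (∏ i : Fin n, (ξ ^ (g i).val) ^ (e i.succ)) * coeff e F := by
  classical
  have h1 : sig k ξ g F
      = ∑ s ∈ F.support, monomial s (coeff s F * ∏ i : Fin n, (ξ ^ (g i).val) ^ (s i.succ)) := by
    conv_lhs => rw [← support_sum_monomial_coeff F]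
    rw [map_sum]
    exact Finset.sum_congr rfl fun s _ => sig_monomial g s (coeff s F)
  rw [h1, MvPolynomial.coeff_sum]
  rw [Finset.sum_eq_single e]
  · rw [coeff_monomial, if_pos rfl]; ring
  · intro s _ hne
    rw [coeff_monomial, if_neg hne]
  · intro hne
    rw [coeff_monomial, if_pos rfl, notMem_support_iff.1 hne, zero_mul]

lemma sig_qIdeal_le (hk : 0 < k) (g : Fin n → ZMod k) :
    Ideal.map (sig k ξ g) (qIdeal n k ξ g) ≤ qIdeal n k ξ 0 := by
  haveI : NeZero k := ⟨hk.ne'⟩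
  rw [qIdeal, Ideal.map_span, Ideal.span_le]
  rintro p ⟨q, ⟨i, rfl⟩, rfl⟩
  have h1 : sig k ξ g (X i.succ - C (ξ ^ (g i).val) * X (0 : Fin (n+1)))
      = C (ξ ^ (g i).val)
        * (X i.succ - C (ξ ^ (((0 : Fin n → ZMod k)) i).val) * X (0 : Fin (n+1))) := by
    simp only [map_sub, map_mul, sig, aeval_X, aeval_C, Fin.cases_succ, Fin.cases_zero,
      MvPolynomial.algebraMap_eq, Pi.zero_apply, ZMod.val_zero, pow_zero, C_1, one_mul]
    ring
  rw [h1]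
  exact Ideal.mul_mem_left _ _ (Ideal.subset_span ⟨i, rfl⟩)

lemma sig_mem_pow (hk : 0 < k) (g : Fin n → ZMod k) (d : ℕ)
    {F : MvPolynomial (Fin (n+1)) ℂ} (hF : F ∈ qIdeal n k ξ g ^ d) :
    sig k ξ g F ∈ qIdeal n k ξ 0 ^ d := by
  have h1 : sig k ξ g F ∈ Ideal.map (sig k ξ g) (qIdeal n k ξ g ^ d) :=
    Ideal.mem_map_of_mem _ hF
  rw [Ideal.map_pow] at h1
  exact Ideal.pow_right_mono (sig_qIdeal_le hk g) d h1

lemma sig_zero (hk : 0 < k) (F : MvPolynomial (Fin (n+1)) ℂ) :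
    sig k ξ (0 : Fin n → ZMod k) F = F := by
  haveI : NeZero k := ⟨hk.ne'⟩
  have h : sig k ξ (0 : Fin n → ZMod k) = AlgHom.id ℂ _ := by
    apply algHom_ext
    intro j
    induction j using Fin.cases <;>
      simp [sig, Pi.zero_apply, ZMod.val_zero]
  rw [h]; rfl

end Sig

section Iso

variable {k : ℕ} {ξ : ℂ}

lemma map_map_of_leftInverse (f g : MvPolynomial (Fin (n+1)) ℂ →ₐ[ℂ] MvPolynomial (Fin (n+1)) ℂ)
    (h : ∀ x, f (g x) = x) (I : Ideal (MvPolynomial (Fin (n+1)) ℂ)) :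
    Ideal.map f (Ideal.map g I) = I := by
  have h0 : Ideal.map f (Ideal.map g I)
      = Ideal.map (f : MvPolynomial (Fin (n+1)) ℂ →+* MvPolynomial (Fin (n+1)) ℂ)
          (Ideal.map (g : MvPolynomial (Fin (n+1)) ℂ →+* MvPolynomial (Fin (n+1)) ℂ) I) := rfl
  rw [h0, Ideal.map_map,
    show ((f : MvPolynomial (Fin (n+1)) ℂ →+* MvPolynomial (Fin (n+1)) ℂ).comp
      (g : MvPolynomial (Fin (n+1)) ℂ →+* MvPolynomial (Fin (n+1)) ℂ)) = RingHom.id _ from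
      RingHom.ext h, Ideal.map_id]

lemma isotypic_mem (hk : 2 ≤ k) (hξ : IsPrimitiveRoot ξ k) (d : ℕ) (χ : Fin n → ZMod k)
    (F : MvPolynomial (Fin (n+1)) ℂ)
    (hF : F ∈ qIdeal n k ξ 0 ^ d)
    (hsupp : ∀ e ∈ F.support, ∀ i : Fin n, ((e i.succ : ZMod k)) = χ i) :
    F ∈ (Ideal.span (Set.range fun i : Fin n =>
      (X i.succ ^ k - X 0 ^ k : MvPolynomial (Fin (n+1)) ℂ)))^d := by
  haveI : NeZero k := ⟨by omega⟩
  classical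
  set mchi : MvPolynomial (Fin (n+1)) ℂ := ∏ i : Fin n, X i.succ ^ ((χ i).val) with hmchi
  set red : (Fin (n+1) →₀ ℕ) → (Fin (n+1) →₀ ℕ) := fun e =>
    Finsupp.equivFunOnFinite.symm (fun j => Fin.cases (e 0) (fun i => e i.succ / k) j) with hred
  set H : MvPolynomial (Fin (n+1)) ℂ := ∑ e ∈ F.support, monomial (red e) (coeff e F) with hH
  have hkey : ∀ e ∈ F.support,
      mchi * phik n k (monomial (red e) (coeff e F)) = monomial e (coeff e F) := by
    intro e he
    rw [phik, aeval_monomial, Finsupp.prod_fintype _ _ (fun i => pow_zero _), Fin.prod_univ_succ]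
    simp only [Fin.cases_zero, Fin.cases_succ, MvPolynomial.algebraMap_eq]
    have hr0 : red e 0 = e 0 := by
      simp [hred, Finsupp.coe_equivFunOnFinite_symm]
    have hrs : ∀ i : Fin n, red e i.succ = e i.succ / k := by
      intro i; simp [hred, Finsupp.coe_equivFunOnFinite_symm]
    rw [hr0]
    have hXpow : ∀ i : Fin n, ((X i.succ : MvPolynomial (Fin (n+1)) ℂ) ^ k) ^ (red e i.succ)
        = X i.succ ^ (k * (e i.succ / k)) := by
      intro i; rw [hrs i, ← pow_mul]
    rw [Finset.prod_congr rfl fun i _ => hXpow i]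
    rw [monomial_eq, Finsupp.prod_fintype _ _ (fun i => pow_zero _), Fin.prod_univ_succ]
    have hcomb : ∀ i : Fin n, (X i.succ : MvPolynomial (Fin (n+1)) ℂ) ^ (e i.succ)
        = X i.succ ^ ((χ i).val) * X i.succ ^ (k * (e i.succ / k)) := by
      intro i
      rw [← pow_add]
      congr 1
      have h1 : (χ i).val = e i.succ % k := by
        rw [← hsupp e he i, ZMod.val_natCast]
      rw [h1, Nat.mod_add_div]
    rw [Finset.prod_congr rfl fun i _ => hcomb i, Finset.prod_mul_distrib, hmchi]
    generalize (∏ i : Fin n, (X i.succ : MvPolynomial (Fin (n+1)) ℂ) ^ ((χ i).val)) = P1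
    generalize (∏ i : Fin n, (X i.succ : MvPolynomial (Fin (n+1)) ℂ) ^ (k * (e i.succ / k))) = P2
    ring
  have hfact : F = mchi * phik n k H := by
    rw [hH, map_sum, Finset.mul_sum]
    conv_lhs => rw [← support_sum_monomial_coeff F]
    exact Finset.sum_congr rfl fun e he => (hkey e he).symm
  have hq0 : qIdeal n k ξ 0 ^ d = Ideal.map (tminus n) (Pid n ^ d) := by
    rw [Ideal.map_pow, qIdeal_zero_eq k ξ (by omega)]
  have htF : tplus n F ∈ Pid n ^ d := by
    have h2 : tplus n F ∈ Ideal.map (tplus n) (qIdeal n k ξ 0 ^ d) :=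
      Ideal.mem_map_of_mem _ hF
    rw [hq0, map_map_of_leftInverse (tplus n) (tminus n) tplus_tminus] at h2
    exact h2
  rw [hfact, map_mul] at htF
  have hnot : tplus n mchi ∉ Pid n := by
    intro hmem
    set pt : Fin (n+1) → ℂ := fun j => Fin.cases 1 (fun _ => 0) j with hpt
    have hker : Pid n ≤ RingHom.ker (eval pt) := by
      rw [Pid, Ideal.span_le]
      rintro p ⟨i, rfl⟩
      simp [RingHom.mem_ker, hpt]
    have h1 : eval pt (tplus n mchi) = 1 := by
      rw [hmchi, map_prod, map_prod]
      have : ∀ i : Fin n, eval pt (tplus n ((X i.succ : MvPolynomial (Fin (n+1)) ℂ) ^ ((χ i).val))) = 1 := by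
        intro i
        rw [map_pow, map_pow]
        simp [tplus, hpt]
      rw [Finset.prod_congr rfl fun i _ => this i, Finset.prod_const_one]
    have h2 : eval pt (tplus n mchi) = 0 := hker hmem
    rw [h1] at h2
    exact one_ne_zero h2
  have hθ : tplus n (phik n k H) ∈ Pid n ^ d := Pid_pow_primary hnot htF
  have hHG : H = rminus n k (rplus n k H) := (rminus_rplus k H).symm
  have hθ2 : theta n k (rplus n k H) ∈ Pid n ^ d := by
    rw [hHG] at hθ
    rwa [theta_decomp] at hθ
  have hGmem : rplus n k H ∈ Pid n ^ d :=
    theta_key k d (by omega) _ ((mem_Pid_pow_iff _ _).1 hθ2)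
  have hHmem : H ∈ Ideal.map (rminus n k) (Pid n ^ d) := by
    rw [hHG]
    exact Ideal.mem_map_of_mem _ hGmem
  have hphiH : phik n k H ∈ (Ideal.span (Set.range fun i : Fin n =>
      (X i.succ ^ k - X 0 ^ k : MvPolynomial (Fin (n+1)) ℂ)))^d := by
    have h5 : phik n k H ∈ Ideal.map (phik n k) (Ideal.map (rminus n k) (Pid n ^ d)) :=
      Ideal.mem_map_of_mem _ hHmem
    rw [Ideal.map_pow, Ideal.map_pow, Pid, span_range_map, span_range_map] at h5
    have h6 : (fun i : Fin n => phik n k (rminus n k (X i.succ)))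
        = fun i : Fin n => (X i.succ ^ k - X 0 ^ k : MvPolynomial (Fin (n+1)) ℂ) := by
      funext i
      simp [phik, rminus, map_sub, map_pow]
    rwa [h6] at h5
  rw [hfact]
  exact Ideal.mul_mem_left _ _ hphiH

end Iso

section Fourier

variable {k : ℕ} {ξ : ℂ}

lemma fourier_sum [NeZero k] (hk : 2 ≤ k) (hξ : IsPrimitiveRoot ξ k) (f : MvPolynomial (Fin (n+1)) ℂ) :
    ∑ χ : Fin n → ZMod k, ∑ g : Fin n → ZMod k,
        (∏ i : Fin n, ξ ^ (((- g i) * χ i).val)) • sig k ξ g f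
      = ((k:ℂ)^n) • f := by
  haveI : NeZero k := ⟨by omega⟩
  classical
  rw [Finset.sum_comm]
  have h1 : ∀ g : Fin n → ZMod k,
      (∑ χ : Fin n → ZMod k, ∏ i : Fin n, ξ ^ (((- g i) * χ i).val))
        = if g = 0 then ((k:ℂ))^n else 0 := by
    intro g
    have h2 : (∑ χ : Fin n → ZMod k, ∏ i : Fin n, ξ ^ (((- g i) * χ i).val))
        = ∏ i : Fin n, ∑ c : ZMod k, ξ ^ ((c * (- g i)).val) := by
      rw [Finset.prod_univ_sum]
      rw [Fintype.piFinset_univ]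
      refine Finset.sum_congr rfl fun χ _ => Finset.prod_congr rfl fun i _ => ?_
      rw [mul_comm]
    rw [h2]
    rw [Finset.prod_congr rfl fun i (_ : i ∈ Finset.univ) => char_sum hξ (- g i)]
    by_cases hg : g = 0
    · subst hg
      simp
    · rw [if_neg hg]
      obtain ⟨i, hi⟩ : ∃ i, g i ≠ 0 := by
        by_contra hcon
        push_neg at hcon
        exact hg (funext fun i => hcon i)
      refine Finset.prod_eq_zero (Finset.mem_univ i) ?_
      rw [if_neg (fun hcon => hi (neg_eq_zero.1 hcon))]
  calc ∑ g : Fin n → ZMod k, ∑ χ : Fin n → ZMod k,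
        (∏ i : Fin n, ξ ^ (((- g i) * χ i).val)) • sig k ξ g f
      = ∑ g : Fin n → ZMod k,
          (∑ χ : Fin n → ZMod k, ∏ i : Fin n, ξ ^ (((- g i) * χ i).val)) • sig k ξ g f := by
        exact Finset.sum_congr rfl fun g _ => (Finset.sum_smul).symm
    _ = ∑ g : Fin n → ZMod k, (if g = 0 then ((k:ℂ))^n else 0) • sig k ξ g f := by
        exact Finset.sum_congr rfl fun g _ => by rw [h1 g]
    _ = ((k:ℂ)^n) • sig k ξ (0 : Fin n → ZMod k) f := by
        rw [Finset.sum_eq_single (0 : Fin n → ZMod k)]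
        · rw [if_pos rfl]
        · intro g _ hg
          rw [if_neg hg, zero_smul]
        · intro h
          exact absurd (Finset.mem_univ _) h
    _ = ((k:ℂ)^n) • f := by rw [sig_zero (by omega : 0 < k)]

lemma fourier_coeff [NeZero k] (hk : 2 ≤ k) (hξ : IsPrimitiveRoot ξ k) (f : MvPolynomial (Fin (n+1)) ℂ)
    (χ : Fin n → ZMod k) (e : Fin (n+1) →₀ ℕ)
    (hne : ∃ i : Fin n, ((e i.succ : ZMod k)) ≠ χ i) :
    coeff e (∑ g : Fin n → ZMod k,
      (∏ i : Fin n, ξ ^ (((- g i) * χ i).val)) • sig k ξ g f) = 0 := by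
  haveI : NeZero k := ⟨by omega⟩
  classical
  rw [MvPolynomial.coeff_sum]
  have h1 : ∀ g : Fin n → ZMod k,
      coeff e ((∏ i : Fin n, ξ ^ (((- g i) * χ i).val)) • sig k ξ g f)
        = (∏ i : Fin n, ξ ^ ((g i * ((e i.succ : ZMod k) - χ i)).val)) * coeff e f := by
    intro g
    rw [MvPolynomial.coeff_smul, coeff_sig, smul_eq_mul, ← mul_assoc, ← Finset.prod_mul_distrib]
    congr 1
    refine Finset.prod_congr rfl fun i _ => ?_
    rw [zeta_pow_val_mul (by omega : 0 < k) hξ (g i) (e i.succ), zeta_mul (by omega : 0 < k) hξ]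
    have hAB : (- g i) * χ i + g i * ((e i.succ : ZMod k)) = g i * ((e i.succ : ZMod k) - χ i) := by
      ring
    rw [hAB]
  rw [Finset.sum_congr rfl fun g _ => h1 g, ← Finset.sum_mul]
  have h2 : (∑ g : Fin n → ZMod k, ∏ i : Fin n, ξ ^ ((g i * ((e i.succ : ZMod k) - χ i)).val)) = 0 := by
    have h3 : (∏ i : Fin n, ∑ c : ZMod k, ξ ^ ((c * ((e i.succ : ZMod k) - χ i)).val))
        = ∑ g : Fin n → ZMod k, ∏ i : Fin n, ξ ^ ((g i * ((e i.succ : ZMod k) - χ i)).val) := by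
      rw [Finset.prod_univ_sum, Fintype.piFinset_univ]
    rw [← h3]
    obtain ⟨i, hi⟩ := hne
    refine Finset.prod_eq_zero (Finset.mem_univ i) ?_
    rw [char_sum hξ ((e i.succ : ZMod k) - χ i), if_neg (fun hcon => hi (sub_eq_zero.1 hcon))]
  rw [h2, zero_mul]

lemma hard_le (hk : 2 ≤ k) (hξ : IsPrimitiveRoot ξ k) (d : ℕ) :
    fatIdealK n k d ξ ≤ (Ideal.span (Set.range fun i : Fin n =>
      (X i.succ ^ k - X 0 ^ k : MvPolynomial (Fin (n+1)) ℂ)))^d := by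
  intro f hf
  haveI : NeZero k := ⟨by omega⟩
  classical
  simp only [fatIdealK] at hf
  have hmem : ∀ g : Fin n → ZMod k, f ∈ qIdeal n k ξ g ^ d := by
    intro g
    exact Ideal.mem_iInf.1 hf g
  set J0 := (Ideal.span (Set.range fun i : Fin n =>
      (X i.succ ^ k - X 0 ^ k : MvPolynomial (Fin (n+1)) ℂ))) with hJ0
  have hχ : ∀ χ : Fin n → ZMod k,
      (∑ g : Fin n → ZMod k, (∏ i : Fin n, ξ ^ (((- g i) * χ i).val)) • sig k ξ g f) ∈ J0 ^ d := by
    intro χ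
    refine isotypic_mem hk hξ d χ _ ?_ ?_
    · refine Submodule.sum_mem _ fun g _ => ?_
      rw [smul_eq_C_mul]
      exact Ideal.mul_mem_left _ _ (sig_mem_pow (by omega) g d (hmem g))
    · intro e he i
      by_contra hcon
      exact (mem_support_iff.1 he) (fourier_coeff hk hξ f χ e ⟨i, hcon⟩)
  have hsum : ((k:ℂ)^n) • f ∈ J0 ^ d := by
    rw [← fourier_sum hk hξ f]
    exact Submodule.sum_mem _ fun χ _ => hχ χ
  have hkn : ((k:ℂ)^n) ≠ 0 := pow_ne_zero _ (Nat.cast_ne_zero.2 (by omega))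
  have hfe : f = C (((k:ℂ)^n)⁻¹) * (((k:ℂ)^n) • f) := by
    rw [smul_eq_C_mul, ← mul_assoc, ← map_mul, inv_mul_cancel₀ hkn, C_1, one_mul]
  rw [hfe]
  exact Ideal.mul_mem_left _ _ hsum

lemma easy_le (hk : 2 ≤ k) (hξ : IsPrimitiveRoot ξ k) (d : ℕ) :
    (Ideal.span (Set.range fun i : Fin n =>
      (X i.succ ^ k - X 0 ^ k : MvPolynomial (Fin (n+1)) ℂ)))^d ≤ fatIdealK n k d ξ := by
  refine le_iInf fun g => Ideal.pow_right_mono ?_ d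
  rw [Ideal.span_le]
  rintro p ⟨i, rfl⟩
  simp only [SetLike.mem_coe]
  have hz : ((ξ ^ ((g i).val)) : ℂ)^k = 1 := by
    rw [← pow_mul, mul_comm, pow_mul, hξ.pow_eq_one, one_pow]
  have h1 : (X i.succ : MvPolynomial (Fin (n+1)) ℂ)^k - X 0^k
      = X i.succ ^ k - (C (ξ^((g i).val)) * X 0)^k := by
    rw [mul_pow, ← C_pow, hz, C_1, one_mul]
  rw [h1]
  obtain ⟨q, hq⟩ := sub_dvd_pow_sub_pow (X i.succ : MvPolynomial (Fin (n+1)) ℂ)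
    (C (ξ^((g i).val)) * X 0) k
  rw [hq]
  exact Ideal.mul_mem_right _ _ (Ideal.subset_span ⟨i, rfl⟩)

lemma fat_eq (hk : 2 ≤ k) (hξ : IsPrimitiveRoot ξ k) (d : ℕ) :
    fatIdealK n k d ξ = (Ideal.span (Set.range fun i : Fin n =>
      (X i.succ ^ k - X 0 ^ k : MvPolynomial (Fin (n+1)) ℂ)))^d :=
  le_antisymm (hard_le hk hξ d) (easy_le hk hξ d)

end Fourier

lemma prod_pow_update {A : Type*} [CommMonoid A] {m : ℕ} (y : Fin m → A) (a : Fin m → ℕ)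
    (i : Fin m) (b : ℕ) :
    (∏ j, y j ^ (Function.update a i b j)) = y i ^ b * ∏ j ∈ Finset.univ.erase i, y j ^ a j := by
  rw [← Finset.mul_prod_erase Finset.univ (fun j => y j ^ (Function.update a i b j))
    (Finset.mem_univ i), Function.update_self]
  congr 1
  refine Finset.prod_congr rfl fun j hj => ?_
  rw [Function.update_of_ne (Finset.ne_of_mem_erase hj)]

lemma sum_update' {m : ℕ} (a : Fin m → ℕ) (i : Fin m) (b : ℕ) :
    (∑ j, Function.update a i b j) = b + ∑ j ∈ Finset.univ.erase i, a j := by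
  rw [← Finset.add_sum_erase Finset.univ (fun j => Function.update a i b j)
    (Finset.mem_univ i), Function.update_self]
  congr 1
  refine Finset.sum_congr rfl fun j hj => ?_
  rw [Function.update_of_ne (Finset.ne_of_mem_erase hj)]

lemma span_pow_prods {A : Type*} [CommRing A] {m : ℕ} (y : Fin m → A) (d : ℕ) :
    (Ideal.span (Set.range y))^d
      = Ideal.span {p | ∃ a : Fin m → ℕ, (∑ i, a i) = d ∧ p = ∏ i, y i ^ a i} := by
  classical
  induction d with
  | zero =>
    rw [pow_zero, Ideal.one_eq_top]
    symm
    rw [Ideal.eq_top_iff_one]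
    exact Ideal.subset_span ⟨fun _ => 0, by simp, by simp⟩
  | succ d ih =>
    rw [pow_succ, ih, Ideal.span_mul_span']
    apply le_antisymm
    · rw [Ideal.span_le]
      rintro p hp
      obtain ⟨p1, hp1, p2, hp2, rfl⟩ := Set.mem_mul.1 hp
      obtain ⟨a, ha, rfl⟩ := hp1
      obtain ⟨i, rfl⟩ := hp2
      refine Ideal.subset_span ⟨Function.update a i (a i + 1), ?_, ?_⟩
      · rw [sum_update']
        have h2 := Finset.add_sum_erase Finset.univ a (Finset.mem_univ i)
        omega
      · rw [prod_pow_update]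
        rw [← Finset.mul_prod_erase Finset.univ (fun j => y j ^ a j) (Finset.mem_univ i)]
        rw [pow_succ]
        ring
    · rw [Ideal.span_le]
      rintro p ⟨a, ha, rfl⟩
      obtain ⟨i, hi⟩ : ∃ i, a i ≠ 0 := by
        by_contra hcon
        push_neg at hcon
        have hz : (∑ i, a i) = 0 := Finset.sum_eq_zero fun i _ => hcon i
        omega
      have hdecomp : (∏ j, y j ^ a j)
          = (∏ j, y j ^ (Function.update a i (a i - 1) j)) * y i := by
        rw [prod_pow_update]
        rw [← Finset.mul_prod_erase Finset.univ (fun j => y j ^ a j) (Finset.mem_univ i)]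
        conv_lhs => rw [show a i = (a i - 1) + 1 from by omega, pow_succ]
        ring
      rw [hdecomp]
      refine Ideal.subset_span
        (Set.mul_mem_mul ⟨Function.update a i (a i - 1), ?_, rfl⟩ ⟨i, rfl⟩)
      rw [sum_update']
      have h2 := Finset.add_sum_erase Finset.univ a (Finset.mem_univ i)
      omega

lemma J0_eq_J {k : ℕ} :
    (Ideal.span (Set.range fun i : Fin n =>
        (X i.succ ^ k - X 0 ^ k : MvPolynomial (Fin (n+1)) ℂ)))
    = Ideal.span {p : MvPolynomial (Fin (n+1)) ℂ |
        ∃ i : Fin n, p = X (Fin.castSucc i) ^ k - X (Fin.last n) ^ k} := by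
  apply le_antisymm
  · rw [Ideal.span_le]
    rintro p ⟨i, rfl⟩
    simp only [SetLike.mem_coe]
    have hall : ∀ j : Fin (n+1), (X j ^ k - X (Fin.last n) ^ k : MvPolynomial (Fin (n+1)) ℂ)
        ∈ Ideal.span {p : MvPolynomial (Fin (n+1)) ℂ |
            ∃ i : Fin n, p = X (Fin.castSucc i) ^ k - X (Fin.last n) ^ k} := by
      intro j
      rcases Fin.eq_castSucc_or_eq_last j with ⟨i', rfl⟩ | rfl
      · exact Ideal.subset_span ⟨i', rfl⟩
      · rw [sub_self]; exact Submodule.zero_mem _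
    have hid : (X i.succ ^ k - X 0 ^ k : MvPolynomial (Fin (n+1)) ℂ)
        = (X i.succ ^ k - X (Fin.last n) ^ k)
          - (X (0:Fin (n+1)) ^ k - X (Fin.last n) ^ k) := by ring
    rw [hid]
    exact Submodule.sub_mem _ (hall _) (hall _)
  · rw [Ideal.span_le]
    rintro p ⟨i, rfl⟩
    simp only [SetLike.mem_coe]
    have hall : ∀ j : Fin (n+1), (X j ^ k - X 0 ^ k : MvPolynomial (Fin (n+1)) ℂ)
        ∈ Ideal.span (Set.range fun i : Fin n =>
            (X i.succ ^ k - X 0 ^ k : MvPolynomial (Fin (n+1)) ℂ)) := by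
      intro j
      rcases Fin.eq_zero_or_eq_succ j with rfl | ⟨i', rfl⟩
      · rw [sub_self]; exact Submodule.zero_mem _
      · exact Ideal.subset_span ⟨i', rfl⟩
    have hid : (X (Fin.castSucc i) ^ k - X (Fin.last n) ^ k : MvPolynomial (Fin (n+1)) ℂ)
        = (X (Fin.castSucc i) ^ k - X 0 ^ k) - (X (Fin.last n) ^ k - X 0 ^ k) := by ring
    rw [hid]
    exact Submodule.sub_mem _ (hall _) (hall _)

end FatAux

theorem stmt17 (n k d : ℕ) (hn : 1 ≤ n) (hk : 2 ≤ k) (hd : 1 ≤ d)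
    (ξ : ℂ) (hξ : IsPrimitiveRoot ξ k) :
    fatIdealK n k d ξ
      = (Ideal.span { p : MvPolynomial (Fin (n+1)) ℂ |
          ∃ i : Fin n, p = X (Fin.castSucc i) ^ k - X (Fin.last n) ^ k }) ^ d ∧
    fatIdealK n k d ξ
      = Ideal.span { p : MvPolynomial (Fin (n+1)) ℂ |
          ∃ a : Fin n → ℕ, (∑ i, a i) = d ∧
            p = ∏ i : Fin n,
              (X (Fin.castSucc i) ^ k - X (Fin.last n) ^ k) ^ a i } ∧
    fatIdealK n k d ξ = (⨅ g : Fin n → ZMod k, qIdeal n k ξ g) ^ d := by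
  haveI : NeZero k := ⟨by omega⟩
  have base : ∀ d' : ℕ, fatIdealK n k d' ξ
      = (Ideal.span (Set.range fun i : Fin n =>
          (X i.succ ^ k - X 0 ^ k : MvPolynomial (Fin (n+1)) ℂ)))^d' :=
    fun d' => FatAux.fat_eq hk hξ d'
  have hJ := FatAux.J0_eq_J (n := n) (k := k)
  refine ⟨?_, ?_, ?_⟩
  · rw [base d, hJ]
  · rw [base d, hJ]
    have hrange : {p : MvPolynomial (Fin (n+1)) ℂ |
          ∃ i : Fin n, p = X (Fin.castSucc i) ^ k - X (Fin.last n) ^ k}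
        = Set.range (fun i : Fin n =>
            (X (Fin.castSucc i) ^ k - X (Fin.last n) ^ k : MvPolynomial (Fin (n+1)) ℂ)) :=
      FatAux.setOf_eq_range _
    rw [hrange, FatAux.span_pow_prods]
  · have h1 : (⨅ g : Fin n → ZMod k, qIdeal n k ξ g) = fatIdealK n k 1 ξ := by
      simp [fatIdealK, pow_one]
    rw [h1, base 1, pow_one, base d]
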